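/- Let g be the 6-dimensional real Lie algebra with basis e_1, …, e_6 whose only nonzero brackets of basis vectors (up to antisymmetry) are ⁅e_1,e_2⁆ = e_4, ⁅e_1,e_3⁆ = e_5, ⁅e_1,e_4⁆ = e_5, ⁅e_2,e_4⁆ = e_6 (this is the Lie algebra N_{6,2,9}; note that the basis (e_i) is not nice, since ⁅e_1,e_3⁆ and ⁅e_1,e_4⁆ are both proportional to e_5). Then g admits a nice basis: there is a basis f_1, …, f_6 of g whose only nonzero brackets of basis vectors (up to antisymmetry) are ⁅f_1,f_2⁆ = f_4, ⁅f_1,f_4⁆ = f_5, ⁅f_2,f_3⁆ = f_5, ⁅f_1,f_3⁆ = f_6, ⁅f_2,f_4⁆ = f_6, and this basis is nice. -/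

import Mathlib

/-- The structure constants of a basis of a real Lie algebra. -/
noncomputable def structConst {g : Type*} [LieRing g] [LieAlgebra ℝ g] {n : ℕ}
    (b : Module.Basis (Fin n) ℝ g) (i j k : Fin n) : ℝ :=
  b.repr ⁅b i, b j⁆ k

/-- A basis of a real Lie algebra is *nice*. -/
def IsNiceBasis {g : Type*} [LieRing g] [LieAlgebra ℝ g] {n : ℕ}
    (b : Module.Basis (Fin n) ℝ g) : Prop :=
  (∀ i j, ∃ (k : Fin n) (c : ℝ), ⁅b i, b j⁆ = c • b k) ∧
  (∀ i k j j', structConst b i j k ≠ 0 → structConst b i j' k ≠ 0 → j = j')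

section aux
variable {α : Type*}
lemma vec6_0 (a b c d e f : α) : ![a,b,c,d,e,f] 0 = a := rfl
lemma vec6_1 (a b c d e f : α) : ![a,b,c,d,e,f] 1 = b := rfl
lemma vec6_2 (a b c d e f : α) : ![a,b,c,d,e,f] 2 = c := rfl
lemma vec6_3 (a b c d e f : α) : ![a,b,c,d,e,f] 3 = d := rfl
lemma vec6_4 (a b c d e f : α) : ![a,b,c,d,e,f] 4 = e := rfl
lemma vec6_5 (a b c d e f : α) : ![a,b,c,d,e,f] 5 = f := rfl
end aux

def Mcob : Matrix (Fin 6) (Fin 6) ℝ :=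
  !![1,1,0,0,0,0; 1,-1,0,0,0,0; 0,0,-4,0,0,0; 0,0,2,-2,0,0; 0,0,0,0,-2,-2; 0,0,0,0,-2,2]

def Cz : Matrix (Fin 6) (Fin 6) ℤ :=
  !![0,1,1,1,0,0; -1,0,1,1,0,0; -1,-1,0,0,0,0; -1,-1,0,0,0,0; 0,0,0,0,0,0; 0,0,0,0,0,0]

def Kz : Matrix (Fin 6) (Fin 6) (Fin 6) :=
  !![0,3,5,4,0,0; 3,0,4,5,0,0; 5,4,0,0,0,0; 4,5,0,0,0,0; 0,0,0,0,0,0; 0,0,0,0,0,0]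

set_option maxRecDepth 8000 in
lemma Mcob_det : IsUnit Mcob.det := by
  have : Mcob.det = 128 := by
    simp [Mcob, Matrix.det_succ_row_zero, Fin.sum_univ_succ]
    simp [Fin.succAbove, Fin.lt_def]
    norm_num
  rw [this]; norm_num

lemma nice_comb : ∀ i k j j' : Fin 6,
    Kz i j = k → Cz i j ≠ 0 → Kz i j' = k → Cz i j' ≠ 0 → j = j' := by
  intro i k j j'
  fin_cases i <;> fin_cases j <;> fin_cases j' <;> simp [Kz, Cz] <;> omega

set_option maxHeartbeats 2000000 in
/-- The Lie algebra `N_{6,2,9}`, given by `(0,0,0,e¹²,e¹³+e¹⁴,e²⁴)`, admits a nice basis,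
namely one with structure equations `(0,0,0,e¹²,e¹⁴+e²³,e¹³+e²⁴)`. -/
theorem N629_admits_nice_basis
    (g : Type*) [LieRing g] [LieAlgebra ℝ g]
    (e : Module.Basis (Fin 6) ℝ g)
    (h12 : ⁅e 0, e 1⁆ = e 3) (h13 : ⁅e 0, e 2⁆ = e 4)
    (h14 : ⁅e 0, e 3⁆ = e 4) (h24 : ⁅e 1, e 3⁆ = e 5)
    (h0 : ∀ i j : Fin 6, i < j →
      (i, j) ∉ ({(0, 1), (0, 2), (0, 3), (1, 3)} : Set (Fin 6 × Fin 6)) →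
      ⁅e i, e j⁆ = 0) :
    ∃ f : Module.Basis (Fin 6) ℝ g,
      (⁅f 0, f 1⁆ = f 3 ∧ ⁅f 0, f 3⁆ = f 4 ∧ ⁅f 1, f 2⁆ = f 4 ∧
        ⁅f 0, f 2⁆ = f 5 ∧ ⁅f 1, f 3⁆ = f 5 ∧
        (∀ i j : Fin 6, i < j →
          (i, j) ∉ ({(0, 1), (0, 3), (1, 2), (0, 2), (1, 3)} : Set (Fin 6 × Fin 6)) →
          ⁅f i, f j⁆ = 0)) ∧
      IsNiceBasis f := by
  have z04 : ⁅e 0, e 4⁆ = 0 := h0 0 4 (by decide) (by simp)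
  have z05 : ⁅e 0, e 5⁆ = 0 := h0 0 5 (by decide) (by simp)
  have z12 : ⁅e 1, e 2⁆ = 0 := h0 1 2 (by decide) (by simp)
  have z14 : ⁅e 1, e 4⁆ = 0 := h0 1 4 (by decide) (by simp)
  have z15 : ⁅e 1, e 5⁆ = 0 := h0 1 5 (by decide) (by simp)
  have z23 : ⁅e 2, e 3⁆ = 0 := h0 2 3 (by decide) (by simp)
  have z24 : ⁅e 2, e 4⁆ = 0 := h0 2 4 (by decide) (by simp)
  have z25 : ⁅e 2, e 5⁆ = 0 := h0 2 5 (by decide) (by simp)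
  have z34 : ⁅e 3, e 4⁆ = 0 := h0 3 4 (by decide) (by simp)
  have z35 : ⁅e 3, e 5⁆ = 0 := h0 3 5 (by decide) (by simp)
  have z45 : ⁅e 4, e 5⁆ = 0 := h0 4 5 (by decide) (by simp)
  have sk : ∀ x y : g, ⁅y, x⁆ = -⁅x, y⁆ := fun x y => by rw [← lie_skew]
  set φ := Mcob.toLinearEquiv e Mcob_det with hφ
  refine ⟨e.map φ, ?_⟩
  set f := e.map φ with hfdef
  have hf : ∀ i, f i = ∑ j, Mcob j i • e j := by
    intro i
    simp [hfdef, hφ, Matrix.toLinearEquiv, Matrix.toLin_self]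
  have hf0 : f 0 = e 0 + e 1 := by
    rw [hf, Fin.sum_univ_six]
    simp only [Mcob, Matrix.of_apply, vec6_0, vec6_1, vec6_2, vec6_3, vec6_4, vec6_5]
    module
  have hf1 : f 1 = e 0 - e 1 := by
    rw [hf, Fin.sum_univ_six]
    simp only [Mcob, Matrix.of_apply, vec6_0, vec6_1, vec6_2, vec6_3, vec6_4, vec6_5]
    module
  have hf2 : f 2 = (-4 : ℝ) • e 2 + (2 : ℝ) • e 3 := by
    rw [hf, Fin.sum_univ_six]
    simp only [Mcob, Matrix.of_apply, vec6_0, vec6_1, vec6_2, vec6_3, vec6_4, vec6_5]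
    module
  have hf3 : f 3 = (-2 : ℝ) • e 3 := by
    rw [hf, Fin.sum_univ_six]
    simp only [Mcob, Matrix.of_apply, vec6_0, vec6_1, vec6_2, vec6_3, vec6_4, vec6_5]
    module
  have hf4 : f 4 = (-2 : ℝ) • e 4 + (-2 : ℝ) • e 5 := by
    rw [hf, Fin.sum_univ_six]
    simp only [Mcob, Matrix.of_apply, vec6_0, vec6_1, vec6_2, vec6_3, vec6_4, vec6_5]
    module
  have hf5 : f 5 = (-2 : ℝ) • e 4 + (2 : ℝ) • e 5 := by
    rw [hf, Fin.sum_univ_six]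
    simp only [Mcob, Matrix.of_apply, vec6_0, vec6_1, vec6_2, vec6_3, vec6_4, vec6_5]
    module
  have hT : ∀ i j : Fin 6, ⁅f i, f j⁆ = ((Cz i j : ℤ) : ℝ) • f (Kz i j) := by
    intro i j
    fin_cases i <;> fin_cases j <;>
      · simp only [Fin.isValue, show (⟨0, by norm_num⟩ : Fin 6) = 0 from rfl,
          show (⟨1, by norm_num⟩ : Fin 6) = 1 from rfl,
          show (⟨2, by norm_num⟩ : Fin 6) = 2 from rfl,
          show (⟨3, by norm_num⟩ : Fin 6) = 3 from rfl,
          show (⟨4, by norm_num⟩ : Fin 6) = 4 from rfl,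
          show (⟨5, by norm_num⟩ : Fin 6) = 5 from rfl]
        simp only [Cz, Kz, Matrix.of_apply, vec6_0, vec6_1, vec6_2, vec6_3, vec6_4, vec6_5]
        simp only [hf0, hf1, hf2, hf3, hf4, hf5]
        simp only [lie_add, add_lie, lie_sub, sub_lie, lie_smul, smul_lie, lie_self,
          h12, h13, h14, h24, z04, z05, z12, z14, z15, z23, z24, z25, z34, z35, z45,
          sk (e 0) (e 1), sk (e 0) (e 2), sk (e 0) (e 3), sk (e 1) (e 3),
          sk (e 0) (e 4), sk (e 0) (e 5), sk (e 1) (e 2), sk (e 1) (e 4), sk (e 1) (e 5),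
          sk (e 2) (e 3), sk (e 2) (e 4), sk (e 2) (e 5), sk (e 3) (e 4), sk (e 3) (e 5),
          sk (e 4) (e 5), h12, h13, h14, h24]
        push_cast
        module
  have hsc : ∀ i j k, structConst f i j k = if Kz i j = k then ((Cz i j : ℤ) : ℝ) else 0 := by
    intro i j k
    rw [structConst, hT, map_smul, Finsupp.smul_apply, Module.Basis.repr_self,
      Finsupp.single_apply, smul_eq_mul, mul_ite, mul_one, mul_zero]
  refine ⟨⟨?_, ?_, ?_, ?_, ?_, ?_⟩, ?_, ?_⟩
  · rw [hT 0 1]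
    norm_num [show Kz 0 1 = 3 from rfl, show Cz 0 1 = 1 from rfl]
  · rw [hT 0 3]
    norm_num [show Kz 0 3 = 4 from rfl, show Cz 0 3 = 1 from rfl]
  · rw [hT 1 2]
    norm_num [show Kz 1 2 = 4 from rfl, show Cz 1 2 = 1 from rfl]
  · rw [hT 0 2]
    norm_num [show Kz 0 2 = 5 from rfl, show Cz 0 2 = 1 from rfl]
  · rw [hT 1 3]
    norm_num [show Kz 1 3 = 5 from rfl, show Cz 1 3 = 1 from rfl]
  · intro i j hij hmem
    rw [hT i j]
    have : Cz i j = 0 := by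
      fin_cases i <;> fin_cases j <;> first
        | rfl
        | exact absurd hij (by decide)
        | (exfalso; apply hmem; simp)
    rw [this]
    norm_num
  · intro i j
    exact ⟨Kz i j, ((Cz i j : ℤ) : ℝ), hT i j⟩
  · intro i k j j' hj hj'
    rw [hsc] at hj hj'
    have h1 : Kz i j = k ∧ Cz i j ≠ 0 := by
      by_cases hk : Kz i j = k
      · refine ⟨hk, ?_⟩
        rw [if_pos hk] at hj
        exact_mod_cast hj
      · rw [if_neg hk] at hj; exact absurd rfl hj
    have h2 : Kz i j' = k ∧ Cz i j' ≠ 0 := by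
      by_cases hk : Kz i j' = k
      · refine ⟨hk, ?_⟩
        rw [if_pos hk] at hj'
        exact_mod_cast hj'
      · rw [if_neg hk] at hj'; exact absurd rfl hj'
    exact nice_comb i k j j' h1.1 h1.2 h2.1 h2.2
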